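/- arXiv:2605.22713 — 2 statements merged into one kernel-verified Lean document; each statement's English description precedes it below -/
import Mathlib

section
/- Let M ⊆ B(H) be a von Neumann algebra and let (R, T, ψ) be a bipartite exact embezzlement protocol for α in (M, M', H). Let P be the orthogonal projection of H onto the closure of {Y ψ : Y ∈ M'} and P' the orthogonal projection onto the closure of {X ψ : X ∈ M}. Set V i = P (R i 0)* P and W j = P' (T j 0)* P'. Then for every j ∈ Fin d: (V j)* (V j) = P, ∑_{i ∈ Fin d} (V i)(V i)* = P, (W j)* (W j) = P', and ∑_{i ∈ Fin d} (W i)(W i)* = P'. In particular the compressions V₀, …, V_{d-1} form a collection of d Cuntz isometries on the range of P, and W₀, …, W_{d-1} on the range of P'. -/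
open scoped InnerProductSpace
open ContinuousLinearMap

/-- The block operator on `ℓ²(Fin d; H)` associated with a `d × d` matrix of operators on `H`,
acting by `(R x) i = ∑ j, (R i j) (x j)`. -/
noncomputable def blockOp {H : Type*} [NormedAddCommGroup H] [InnerProductSpace ℂ H] {d : ℕ}
    (R : Fin d → Fin d → H →L[ℂ] H) :
    (PiLp 2 fun _ : Fin d => H) →L[ℂ] (PiLp 2 fun _ : Fin d => H) :=
  (((PiLp.continuousLinearEquiv 2 ℂ (fun _ : Fin d => H)).symm :
      (∀ _ : Fin d, H) →L[ℂ] (PiLp 2 fun _ : Fin d => H))) ∘L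
    (ContinuousLinearMap.pi fun i => ∑ j, (R i j) ∘L (ContinuousLinearMap.proj j)) ∘L
    (((PiLp.continuousLinearEquiv 2 ℂ (fun _ : Fin d => H)) :
      (PiLp 2 fun _ : Fin d => H) →L[ℂ] (∀ _ : Fin d, H)))

variable {H : Type*} [NormedAddCommGroup H] [InnerProductSpace ℂ H] [CompleteSpace H]

/-- `R` is a contraction in `M_d ⊗ M`: all blocks lie in `M` and the block operator on
`ℓ²(Fin d; H)` has operator norm at most `1`. -/
def IsContractionIn (M : VonNeumannAlgebra H) {d : ℕ}
    (R : Fin d → Fin d → H →L[ℂ] H) : Prop :=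
  (∀ i j, R i j ∈ M) ∧ ‖blockOp R‖ ≤ 1

/-- A bipartite exact embezzlement protocol for `α` in `(M, M', H)`: `R` is a contraction in
`M_d ⊗ M`, `T` is a contraction with blocks in the commutant `M'`, `ψ` is a unit vector, and
`(R i 0)(T j 0) ψ = δ_{ij} α i • ψ` for all `i, j`. -/
def BipartiteProtocol (M : VonNeumannAlgebra H) {d : ℕ} [NeZero d] (α : Fin d → ℝ)
    (R T : Fin d → Fin d → H →L[ℂ] H) (ψ : H) : Prop :=
  IsContractionIn M R ∧ IsContractionIn M.commutant T ∧ ‖ψ‖ = 1 ∧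
    ∀ i j, (R i 0) ((T j 0) ψ) = (if i = j then (α i : ℂ) else 0) • ψ

/-- A monopartite exact embezzlement protocol for `α` in `(M, H)`: `R` is a contraction in
`M_d ⊗ M`, `ψ` is a unit vector, and `⟨(R i 0)* X (R j 0) ψ, ψ⟩ = δ_{ij} (α i)² ⟨X ψ, ψ⟩`
for all `X ∈ M` and all `i, j`. -/
def MonopartiteProtocol (M : VonNeumannAlgebra H) {d : ℕ} [NeZero d] (α : Fin d → ℝ)
    (R : Fin d → Fin d → H →L[ℂ] H) (ψ : H) : Prop :=
  IsContractionIn M R ∧ ‖ψ‖ = 1 ∧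
    ∀ X ∈ M, ∀ i j : Fin d,
      ⟪(adjoint (R i 0)) (X ((R j 0) ψ)), ψ⟫_ℂ
        = (if i = j then ((α i : ℂ)) ^ 2 else 0) * ⟪X ψ, ψ⟫_ℂ

/-- The orthogonal projection of `H` onto the closure of `{Y ψ : Y ∈ S}`, as an operator
on `H`. -/
noncomputable def suppProjOn (S : Set (H →L[ℂ] H)) (ψ : H) : H →L[ℂ] H :=
  letI K := (Submodule.span ℂ ((fun Y : H →L[ℂ] H => Y ψ) '' S)).topologicalClosure
  K.subtypeL ∘L (Submodule.orthogonalProjection K : H →L[ℂ] K)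

/-- The support projection of the state `⟨· ψ, ψ⟩` on `M`: the orthogonal projection onto
the closure of `M' ψ`. -/
noncomputable def suppP (M : VonNeumannAlgebra H) (ψ : H) : H →L[ℂ] H :=
  suppProjOn (M.commutant : Set (H →L[ℂ] H)) ψ

/-- The support projection of the state `⟨· ψ, ψ⟩` on `M'`: the orthogonal projection onto
the closure of `M ψ`. -/
noncomputable def suppP' (M : VonNeumannAlgebra H) (ψ : H) : H →L[ℂ] H :=
  suppProjOn (M : Set (H →L[ℂ] H)) ψ

/-! ### Auxiliary lemmas -/

/-- Column bound: if the block operator is a contraction, then the first column is a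
contraction as well. -/
lemma cuntz_column_bound {d : ℕ} [NeZero d] (R : Fin d → Fin d → H →L[ℂ] H)
    (hR : ‖blockOp R‖ ≤ 1) (v : H) : ∑ i, ‖R i 0 v‖ ^ 2 ≤ ‖v‖ ^ 2 := by
  set x : PiLp 2 (fun _ : Fin d => H) :=
    (PiLp.continuousLinearEquiv 2 ℂ (fun _ : Fin d => H)).symm (Pi.single 0 v) with hx
  have hxi : ∀ j, x j = (Pi.single (0 : Fin d) v : ∀ _ : Fin d, H) j := fun j => rfl
  have hxnorm : ‖x‖ ^ 2 = ‖v‖ ^ 2 := by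
    rw [PiLp.norm_sq_eq_of_L2]
    rw [Finset.sum_eq_single 0]
    · simp [hxi]
    · intro b _ hb
      rw [hxi, Pi.single_eq_of_ne hb]
      simp
    · simp
  have happ : ∀ i, (blockOp R x) i = R i 0 v := by
    intro i
    simp only [blockOp, comp_apply, hx]
    rw [ContinuousLinearEquiv.coe_coe, ContinuousLinearEquiv.coe_coe,
      ContinuousLinearEquiv.apply_symm_apply]
    change (ContinuousLinearMap.pi fun i => ∑ j, (R i j) ∘L (ContinuousLinearMap.proj j))
      (Pi.single 0 v) i = _
    rw [ContinuousLinearMap.pi_apply, ContinuousLinearMap.sum_apply]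
    rw [Finset.sum_eq_single 0]
    · simp
    · intro b _ hb
      have : (Pi.single (0 : Fin d) v : ∀ _ : Fin d, H) b = 0 := Pi.single_eq_of_ne hb _
      simp [this]
    · simp
  have h1 : ‖blockOp R x‖ ≤ ‖x‖ := by
    calc ‖blockOp R x‖ ≤ ‖blockOp R‖ * ‖x‖ := (blockOp R).le_opNorm x
    _ ≤ 1 * ‖x‖ := by gcongr
    _ = ‖x‖ := one_mul _
  have h2 : ∑ i, ‖R i 0 v‖ ^ 2 = ‖blockOp R x‖ ^ 2 := by
    rw [PiLp.norm_sq_eq_of_L2]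
    exact Finset.sum_congr rfl fun i _ => by rw [happ]
  rw [h2, ← hxnorm]
  exact pow_le_pow_left₀ (norm_nonneg _) h1 2

/-- A positive operator vanishing on the diagonal at `v` kills `v`. -/
lemma cuntz_pos_apply_eq_zero (A : H →L[ℂ] H) (hsa : IsSelfAdjoint A)
    (hpos : ∀ x : H, 0 ≤ (⟪A x, x⟫_ℂ).re) {v : H} (hv : ⟪A v, v⟫_ℂ = 0) : A v = 0 := by
  by_cases hw0 : A v = 0
  · exact hw0
  have hadj : ∀ x y : H, ⟪A x, y⟫_ℂ = ⟪x, A y⟫_ℂ := fun x y => hsa.isSymmetric x y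
  have e1 : ⟪A v, A v⟫_ℂ = ((‖A v‖ ^ 2 : ℝ) : ℂ) := by
    rw [inner_self_eq_norm_sq_to_K]; norm_cast
  have e2 : ⟪A (A v), v⟫_ℂ = ((‖A v‖ ^ 2 : ℝ) : ℂ) := by
    rw [hadj (A v) v, inner_self_eq_norm_sq_to_K]; norm_cast
  have key : ∀ t : ℝ, 0 ≤ -2 * t * ‖A v‖ ^ 2 + t ^ 2 * (⟪A (A v), A v⟫_ℂ).re := by
    intro t
    have hc : ⟪A (v - (t : ℂ) • A v), v - (t : ℂ) • A v⟫_ℂ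
        = ((-2 * t * ‖A v‖ ^ 2 : ℝ) : ℂ) + ((t ^ 2 : ℝ) : ℂ) * ⟪A (A v), A v⟫_ℂ := by
      rw [map_sub, map_smul, inner_sub_left, inner_sub_right, inner_sub_right,
        inner_smul_left, inner_smul_right, inner_smul_left, inner_smul_right, hv, e1, e2,
        Complex.conj_ofReal]
      push_cast
      ring
    have h0 := hpos (v - (t : ℂ) • A v)
    rw [hc] at h0
    simpa [Complex.add_re, Complex.mul_re, ← Complex.ofReal_pow] using h0
  have hC : 0 ≤ (⟪A (A v), A v⟫_ℂ).re := hpos (A v)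
  have hwpos : 0 < ‖A v‖ ^ 2 := by
    have := norm_pos_iff.mpr hw0
    positivity
  set C := (⟪A (A v), A v⟫_ℂ).re with hCdef
  set W := ‖A v‖ ^ 2 with hWdef
  have hC1 : 0 < C + 1 := by linarith
  set t := W / (C + 1) with htdef
  have ht : 0 < t := div_pos hwpos hC1
  have htC : t * (C + 1) = W := div_mul_cancel₀ _ (ne_of_gt hC1)
  have hk := key t
  exfalso
  nlinarith [mul_pos ht ht, mul_pos ht hwpos]

/-- If the column contraction attains its norm at `v`, then `∑ i, Aᵢ* Aᵢ v = v`. -/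
lemma cuntz_sum_adjoint_apply {d : ℕ} [NeZero d] (A : Fin d → H →L[ℂ] H)
    (hAcol : ∀ v : H, ∑ i, ‖A i v‖ ^ 2 ≤ ‖v‖ ^ 2) (v : H)
    (hv : ‖v‖ ^ 2 ≤ ∑ i, ‖A i v‖ ^ 2) :
    ∑ i, adjoint (A i) (A i v) = v := by
  set SA : H →L[ℂ] H := ∑ i, star (A i) * A i with hSA
  have hSAapp : ∀ x : H, SA x = ∑ i, adjoint (A i) (A i x) := by
    intro x
    rw [hSA, ContinuousLinearMap.sum_apply]
    exact Finset.sum_congr rfl fun i _ => by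
      rw [ContinuousLinearMap.mul_apply, star_eq_adjoint]
  have hinnerC : ∀ x : H, ⟪((1 : H →L[ℂ] H) - SA) x, x⟫_ℂ
      = ((‖x‖ ^ 2 : ℝ) : ℂ) - ∑ i, ((‖A i x‖ ^ 2 : ℝ) : ℂ) := by
    intro x
    rw [ContinuousLinearMap.sub_apply, inner_sub_left, ContinuousLinearMap.one_apply,
      hSAapp, sum_inner]
    congr 1
    · rw [inner_self_eq_norm_sq_to_K]; norm_cast
    · refine Finset.sum_congr rfl fun i _ => ?_
      rw [ContinuousLinearMap.adjoint_inner_left, inner_self_eq_norm_sq_to_K]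
      norm_cast
  have hsa : IsSelfAdjoint ((1 : H →L[ℂ] H) - SA) := by
    have h1 : IsSelfAdjoint SA := by
      simp only [IsSelfAdjoint, hSA, star_sum, star_mul, star_star]
    have h2 : IsSelfAdjoint (1 : H →L[ℂ] H) := star_one _
    exact h2.sub h1
  have hcast : ∀ x : H, (((‖x‖ ^ 2 : ℝ) : ℂ) - ∑ i, ((‖A i x‖ ^ 2 : ℝ) : ℂ))
      = (((‖x‖ ^ 2 - ∑ i, ‖A i x‖ ^ 2 : ℝ)) : ℂ) := by
    intro x
    norm_cast
  have hpos : ∀ x : H, 0 ≤ (⟪((1 : H →L[ℂ] H) - SA) x, x⟫_ℂ).re := by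
    intro x
    rw [hinnerC, hcast, Complex.ofReal_re]
    have := hAcol x
    linarith
  have hzero : ⟪((1 : H →L[ℂ] H) - SA) v, v⟫_ℂ = 0 := by
    rw [hinnerC, hcast]
    have h0 : ‖v‖ ^ 2 - ∑ i, ‖A i v‖ ^ 2 = 0 := by
      have := hAcol v
      linarith
    rw [h0]
    norm_cast
  have := cuntz_pos_apply_eq_zero _ hsa hpos hzero
  rw [ContinuousLinearMap.sub_apply, ContinuousLinearMap.one_apply, sub_eq_zero] at this
  rw [← hSAapp, ← this]

/-- The exact-embezzlement relation forces `‖B j ψ‖² = (α j)²`. -/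
lemma cuntz_norms_eq {d : ℕ} [NeZero d] (α : Fin d → ℝ) (hα : ∀ i, 0 < α i)
    (hsum : ∑ i, (α i) ^ 2 = 1) (A B : Fin d → H →L[ℂ] H)
    (hAcol : ∀ v : H, ∑ i, ‖A i v‖ ^ 2 ≤ ‖v‖ ^ 2)
    (hBcol : ∀ v : H, ∑ j, ‖B j v‖ ^ 2 ≤ ‖v‖ ^ 2)
    (ψ : H) (hψ : ‖ψ‖ = 1)
    (hAB : ∀ i j, A i (B j ψ) = (if i = j then (α i : ℂ) else 0) • ψ) :
    ∀ j, ‖B j ψ‖ ^ 2 = (α j) ^ 2 := by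
  have hABnorm : ∀ i j, ‖A i (B j ψ)‖ ^ 2 = if i = j then (α i) ^ 2 else 0 := by
    intro i j
    rw [hAB i j]
    by_cases h : i = j
    · simp only [h, if_true]
      rw [norm_smul, hψ, mul_one, Complex.norm_real, Real.norm_eq_abs,
        abs_of_pos (hα j), ← h]
    · simp [h]
  have h1 : ∀ j, (α j) ^ 2 ≤ ‖B j ψ‖ ^ 2 := by
    intro j
    have hle : ‖A j (B j ψ)‖ ^ 2 ≤ ∑ i, ‖A i (B j ψ)‖ ^ 2 :=
      Finset.single_le_sum (f := fun i => ‖A i (B j ψ)‖ ^ 2)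
        (fun i _ => by positivity) (Finset.mem_univ j)
    have := hAcol (B j ψ)
    have hj := hABnorm j j
    simp only [if_true] at hj
    linarith [hj ▸ hle]
  have h2 : ∑ j, ‖B j ψ‖ ^ 2 ≤ 1 := by
    have := hBcol ψ
    rw [hψ] at this
    simpa using this
  have h3 : ∑ j, (‖B j ψ‖ ^ 2 - (α j) ^ 2) = 0 := by
    have hge : (0 : ℝ) ≤ ∑ j, (‖B j ψ‖ ^ 2 - (α j) ^ 2) :=
      Finset.sum_nonneg fun j _ => by linarith [h1 j]
    have hle : ∑ j, (‖B j ψ‖ ^ 2 - (α j) ^ 2) ≤ 0 := by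
      rw [Finset.sum_sub_distrib, hsum]
      linarith
    linarith
  intro j
  have := (Finset.sum_eq_zero_iff_of_nonneg
    (fun j _ => by linarith [h1 j] : ∀ j ∈ Finset.univ, (0:ℝ) ≤ ‖B j ψ‖ ^ 2 - (α j) ^ 2)).mp
    h3 j (Finset.mem_univ j)
  linarith

set_option maxHeartbeats 1000000 in
/-- The master lemma: compressions of the adjoints of the first column of `A` to the support
projection of `ψ` on the commutant side form Cuntz isometries. -/
lemma cuntz_master (N : VonNeumannAlgebra H) {d : ℕ} [NeZero d]
    (α : Fin d → ℝ) (hα : ∀ i, 0 < α i) (hsum : ∑ i, (α i) ^ 2 = 1)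
    (A B : Fin d → H →L[ℂ] H)
    (hA : ∀ i, A i ∈ N) (hB : ∀ j, B j ∈ N.commutant)
    (hAcol : ∀ v : H, ∑ i, ‖A i v‖ ^ 2 ≤ ‖v‖ ^ 2)
    (hBcol : ∀ v : H, ∑ j, ‖B j v‖ ^ 2 ≤ ‖v‖ ^ 2)
    (ψ : H) (hψ : ‖ψ‖ = 1)
    (hAB : ∀ i j, A i (B j ψ) = (if i = j then (α i : ℂ) else 0) • ψ)
    (P : H →L[ℂ] H) (hP : P = suppProjOn (N.commutant : Set (H →L[ℂ] H)) ψ) :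
    (∀ j, adjoint (P ∘L adjoint (A j) ∘L P) ∘L (P ∘L adjoint (A j) ∘L P) = P) ∧
      (∑ i, (P ∘L adjoint (A i) ∘L P) ∘L adjoint (P ∘L adjoint (A i) ∘L P)) = P := by
  classical
  -- commutation
  have hcomm : ∀ X : H →L[ℂ] H, X ∈ N → ∀ Y : H →L[ℂ] H, Y ∈ N.commutant →
      ∀ v : H, X (Y v) = Y (X v) := by
    intro X hX Y hY v
    have h := (VonNeumannAlgebra.mem_commutant_iff.mp hY) X hX
    calc X (Y v) = (X * Y) v := (ContinuousLinearMap.mul_apply X Y v).symm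
    _ = (Y * X) v := by rw [h]
    _ = Y (X v) := ContinuousLinearMap.mul_apply Y X v
  have hAs : ∀ i, adjoint (A i) ∈ N := fun i => by
    rw [← star_eq_adjoint]; exact star_mem (hA i)
  have hBs : ∀ j, adjoint (B j) ∈ N.commutant := fun j => by
    rw [← star_eq_adjoint]; exact star_mem (hB j)
  have hBA : ∀ i j, B j (A i ψ) = (if i = j then (α i : ℂ) else 0) • ψ := by
    intro i j
    rw [← hcomm (A i) (hA i) (B j) (hB j) ψ, hAB]
  have hBA' : ∀ i j, B i (A j ψ) = (if i = j then (α i : ℂ) else 0) • ψ := by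
    intro i j
    rw [hBA j i]
    by_cases h : i = j
    · subst h; simp
    · simp [h, Ne.symm h]
  -- norms
  have hBnorm : ∀ j, ‖B j ψ‖ ^ 2 = (α j) ^ 2 :=
    cuntz_norms_eq α hα hsum A B hAcol hBcol ψ hψ hAB
  have hAnorm : ∀ i, ‖A i ψ‖ ^ 2 = (α i) ^ 2 :=
    cuntz_norms_eq α hα hsum B A hBcol hAcol ψ hψ hBA'
  -- kernel identities
  have hαC : ∀ i, (α i : ℂ) ≠ 0 := fun i => by
    exact_mod_cast Complex.ofReal_ne_zero.mpr (ne_of_gt (hα i))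
  have key1 : ∀ j, adjoint (A j) ψ = (α j : ℂ)⁻¹ • B j ψ := by
    intro j
    have hsumnorm : ‖B j ψ‖ ^ 2 ≤ ∑ i, ‖A i (B j ψ)‖ ^ 2 := by
      have : ∑ i, ‖A i (B j ψ)‖ ^ 2 = (α j) ^ 2 := by
        rw [Finset.sum_eq_single j]
        · rw [hAB j j]; simp only [if_true]
          rw [norm_smul, hψ, mul_one, Complex.norm_real, Real.norm_eq_abs, abs_of_pos (hα j)]
        · intro i _ hij
          rw [hAB i j]; simp [hij]
        · simp
      rw [this, hBnorm j]
    have h := cuntz_sum_adjoint_apply A hAcol (B j ψ) hsumnorm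
    have h2 : ∑ i, adjoint (A i) (A i (B j ψ)) = (α j : ℂ) • adjoint (A j) ψ := by
      rw [Finset.sum_eq_single j]
      · rw [hAB j j]; simp only [if_true]; rw [map_smul]
      · intro i _ hij
        rw [hAB i j]
        simp [hij]
      · simp
    rw [h2] at h
    rw [eq_comm, inv_smul_eq_iff₀ (hαC j), h]
  have key2 : ∀ i, A i ψ = (α i : ℂ) • adjoint (B i) ψ := by
    intro i
    have hsumnorm : ‖A i ψ‖ ^ 2 ≤ ∑ j, ‖B j (A i ψ)‖ ^ 2 := by
      have : ∑ j, ‖B j (A i ψ)‖ ^ 2 = (α i) ^ 2 := by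
        rw [Finset.sum_eq_single i]
        · rw [hBA i i]; simp only [if_true]
          rw [norm_smul, hψ, mul_one, Complex.norm_real, Real.norm_eq_abs, abs_of_pos (hα i)]
        · intro j _ hij
          rw [hBA i j]
          have : ¬ (i = j) := fun h => hij h.symm
          simp [this]
        · simp
      rw [this, hAnorm i]
    have h := cuntz_sum_adjoint_apply B hBcol (A i ψ) hsumnorm
    have h2 : ∑ j, adjoint (B j) (B j (A i ψ)) = (α i : ℂ) • adjoint (B i) ψ := by
      rw [Finset.sum_eq_single i]
      · rw [hBA i i]; simp only [if_true]; rw [map_smul]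
      · intro j _ hij
        rw [hBA i j]
        have : ¬ (i = j) := fun h => hij h.symm
        simp [this]
      · simp
    rw [h2] at h
    exact h.symm
  have key3 : ∑ j, adjoint (B j) (B j ψ) = ψ := by
    apply cuntz_sum_adjoint_apply B hBcol ψ
    have : ∑ j, ‖B j ψ‖ ^ 2 = 1 := by
      rw [Finset.sum_congr rfl fun j _ => hBnorm j, hsum]
    rw [this, hψ]
    norm_num
  -- projection facts
  set K := (Submodule.span ℂ ((fun Y : H →L[ℂ] H => Y ψ) ''
      (N.commutant : Set (H →L[ℂ] H)))).topologicalClosure with hK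
  haveI : CompleteSpace K := (Submodule.isClosed_topologicalClosure _).completeSpace_coe
  have hPdef : P = K.subtypeL ∘L (Submodule.orthogonalProjection K : H →L[ℂ] K) := by
    rw [hP]; rfl
  have hPmem : ∀ x : H, P x ∈ K := by
    intro x
    rw [hPdef]
    exact (Submodule.orthogonalProjection K x).2
  have hPid : ∀ x : H, x ∈ K → P x = x := by
    intro x hx
    rw [hPdef]
    exact Submodule.starProjection_eq_self_iff.mpr hx
  have hPsa : IsSelfAdjoint P := by rw [hPdef]; exact isSelfAdjoint_starProjection K
  have hPadj : adjoint P = P := ContinuousLinearMap.isSelfAdjoint_iff'.mp hPsa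
  have hgen : ∀ Y : H →L[ℂ] H, Y ∈ N.commutant → Y ψ ∈ K := by
    intro Y hY
    exact Submodule.le_topologicalClosure _ (Submodule.subset_span ⟨Y, hY, rfl⟩)
  have hPY : ∀ Y : H →L[ℂ] H, Y ∈ N.commutant → P (Y ψ) = Y ψ :=
    fun Y hY => hPid _ (hgen Y hY)
  have hPP : ∀ x : H, P (P x) = P x := fun x => hPid _ (hPmem x)
  -- extension principle
  have hext : ∀ G : H →L[ℂ] H, (∀ Y : H →L[ℂ] H, Y ∈ N.commutant → G (Y ψ) = Y ψ) →
      ∀ x ∈ K, G x = x := by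
    intro G hG x hx
    have h1 : Set.EqOn G (ContinuousLinearMap.id ℂ H)
        ((fun Y : H →L[ℂ] H => Y ψ) '' (N.commutant : Set (H →L[ℂ] H))) := by
      rintro _ ⟨Y, hY, rfl⟩
      exact hG Y hY
    have h2 : Set.EqOn G (ContinuousLinearMap.id ℂ H)
        ((Submodule.span ℂ ((fun Y : H →L[ℂ] H => Y ψ) ''
          (N.commutant : Set (H →L[ℂ] H)))) : Set H) :=
      LinearMap.eqOn_span' h1
    have h3 : closure ((Submodule.span ℂ ((fun Y : H →L[ℂ] H => Y ψ) ''
        (N.commutant : Set (H →L[ℂ] H)))) : Set H) ⊆ {x : H | G x = x} := by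
      apply closure_minimal
      · intro z hz
        exact h2 hz
      · exact isClosed_eq G.continuous continuous_id
    have hx' : x ∈ closure ((Submodule.span ℂ ((fun Y : H →L[ℂ] H => Y ψ) ''
        (N.commutant : Set (H →L[ℂ] H)))) : Set H) := by
      rw [← Submodule.topologicalClosure_coe]
      exact hx
    exact h3 hx'
  -- adjoints of the compressions
  have hVadj : ∀ j, adjoint (P ∘L adjoint (A j) ∘L P) = P ∘L (A j ∘L P) := by
    intro j
    rw [adjoint_comp, adjoint_comp, adjoint_adjoint, hPadj, ← ContinuousLinearMap.comp_assoc]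
  constructor
  · -- V_j* V_j = P
    intro j
    have hGgen : ∀ Y : H →L[ℂ] H, Y ∈ N.commutant →
        ((P ∘L (A j ∘L P)) ∘L (P ∘L adjoint (A j) ∘L P)) (Y ψ) = Y ψ := by
      intro Y hY
      have c1 : adjoint (A j) (Y ψ) = (α j : ℂ)⁻¹ • Y (B j ψ) := by
        rw [hcomm _ (hAs j) Y hY ψ, key1 j, map_smul]
      have c2 : P (Y (B j ψ)) = Y (B j ψ) := by
        have := hPY (Y ∘L B j) (mul_mem hY (hB j))
        simpa using this
      calc ((P ∘L (A j ∘L P)) ∘L (P ∘L adjoint (A j) ∘L P)) (Y ψ)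
          = P (A j (P (P (adjoint (A j) (P (Y ψ)))))) := by simp only [ContinuousLinearMap.comp_apply]
        _ = P (A j (P (P (adjoint (A j) (Y ψ))))) := by rw [hPY Y hY]
        _ = (α j : ℂ)⁻¹ • P (A j (P (P (Y (B j ψ))))) := by
            rw [c1]; simp only [map_smul]
        _ = (α j : ℂ)⁻¹ • P (A j (Y (B j ψ))) := by rw [c2, c2]
        _ = (α j : ℂ)⁻¹ • P (Y (A j (B j ψ))) := by rw [hcomm _ (hA j) Y hY]
        _ = (α j : ℂ)⁻¹ • ((α j : ℂ) • P (Y ψ)) := by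
            rw [hAB j j, if_pos rfl, map_smul, map_smul]
        _ = P (Y ψ) := by rw [smul_smul, inv_mul_cancel₀ (hαC j), one_smul]
        _ = Y ψ := hPY Y hY
    ext x
    rw [hVadj j]
    have hx : ((P ∘L (A j ∘L P)) ∘L (P ∘L adjoint (A j) ∘L P)) (P x)
        = P (P x) := by
      rw [hext ((P ∘L (A j ∘L P)) ∘L (P ∘L adjoint (A j) ∘L P)) hGgen (P x) (hPmem x),
        hPP]
    calc ((P ∘L (A j ∘L P)) ∘L (P ∘L adjoint (A j) ∘L P)) x
        = P (A j (P (P (adjoint (A j) (P x))))) := by simp only [ContinuousLinearMap.comp_apply]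
      _ = P (A j (P (P (adjoint (A j) (P (P x)))))) := by rw [hPP x]
      _ = ((P ∘L (A j ∘L P)) ∘L (P ∘L adjoint (A j) ∘L P)) (P x) := by simp only [ContinuousLinearMap.comp_apply]
      _ = P (P x) := hx
      _ = P x := hPP x
  · -- ∑ V_i V_i* = P
    have hGgen : ∀ Y : H →L[ℂ] H, Y ∈ N.commutant →
        (∑ i, ((P ∘L adjoint (A i) ∘L P) ∘L (P ∘L (A i)))) (Y ψ) = Y ψ := by
      intro Y hY
      rw [ContinuousLinearMap.sum_apply]
      have hterm : ∀ i, ((P ∘L adjoint (A i) ∘L P) ∘L (P ∘L (A i))) (Y ψ)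
          = Y (adjoint (B i) (B i ψ)) := by
        intro i
        have c1 : A i (Y ψ) = (α i : ℂ) • Y (adjoint (B i) ψ) := by
          rw [hcomm _ (hA i) Y hY ψ, key2 i, map_smul]
        have c2 : P (Y (adjoint (B i) ψ)) = Y (adjoint (B i) ψ) := by
          have := hPY (Y ∘L adjoint (B i)) (mul_mem hY (hBs i))
          simpa using this
        have c3 : adjoint (A i) (Y (adjoint (B i) ψ))
            = Y (adjoint (B i) (adjoint (A i) ψ)) := by
          rw [hcomm _ (hAs i) Y hY, hcomm _ (hAs i) _ (hBs i)]
        calc ((P ∘L adjoint (A i) ∘L P) ∘L (P ∘L (A i))) (Y ψ)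
            = P (adjoint (A i) (P (P (A i (Y ψ))))) := by simp only [ContinuousLinearMap.comp_apply]
          _ = (α i : ℂ) • P (adjoint (A i) (P (P (Y (adjoint (B i) ψ))))) := by
              rw [c1]; simp only [map_smul]
          _ = (α i : ℂ) • P (adjoint (A i) (Y (adjoint (B i) ψ))) := by rw [c2, c2]
          _ = (α i : ℂ) • P (Y (adjoint (B i) (adjoint (A i) ψ))) := by rw [c3]
          _ = (α i : ℂ) • ((α i : ℂ)⁻¹ • P (Y (adjoint (B i) (B i ψ)))) := by
              rw [key1 i]; simp only [map_smul]
          _ = P (Y (adjoint (B i) (B i ψ))) := by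
              rw [smul_smul, mul_inv_cancel₀ (hαC i), one_smul]
          _ = Y (adjoint (B i) (B i ψ)) := by
              have := hPY (Y ∘L (adjoint (B i) ∘L B i))
                (mul_mem hY (mul_mem (hBs i) (hB i)))
              simpa using this
      rw [Finset.sum_congr rfl fun i _ => hterm i,
        ← map_sum Y (fun i => adjoint (B i) (B i ψ)) Finset.univ, key3]
    ext x
    rw [ContinuousLinearMap.sum_apply]
    have hterm2 : ∀ i, ((P ∘L adjoint (A i) ∘L P) ∘L adjoint (P ∘L adjoint (A i) ∘L P)) x
        = ((P ∘L adjoint (A i) ∘L P) ∘L (P ∘L (A i))) (P x) := by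
      intro i
      rw [ContinuousLinearMap.comp_apply, hVadj i]
      calc (P ∘L adjoint (A i) ∘L P) ((P ∘L (A i ∘L P)) x)
          = P (adjoint (A i) (P (P (A i (P x))))) := by simp only [ContinuousLinearMap.comp_apply]
        _ = ((P ∘L adjoint (A i) ∘L P) ∘L (P ∘L (A i))) (P x) := by simp only [ContinuousLinearMap.comp_apply]
    rw [Finset.sum_congr rfl fun i _ => hterm2 i, ← ContinuousLinearMap.sum_apply]
    exact hext _ hGgen (P x) (hPmem x)

/-- If `(R, T, ψ)` is a bipartite exact embezzlement protocol for `α`, `P` is the support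
projection onto the closure of `M' ψ`, `P'` the one onto the closure of `M ψ`,
`V i = P (R i 0)* P` and `W j = P' (T j 0)* P'`, then the `V i` form a collection of `d`
Cuntz isometries on the range of `P` and the `W j` one on the range of `P'`:
`(V j)* (V j) = P`, `∑ i, (V i)(V i)* = P`, `(W j)* (W j) = P'`, `∑ i, (W i)(W i)* = P'`. -/
theorem compressions_are_Cuntz_isometries
    {H : Type*} [NormedAddCommGroup H] [InnerProductSpace ℂ H] [CompleteSpace H]
    (M : VonNeumannAlgebra H) {d : ℕ} [NeZero d] (hd : 2 ≤ d)
    (α : Fin d → ℝ) (hα : ∀ i, 0 < α i) (hsum : ∑ i, (α i) ^ 2 = 1)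
    (R T : Fin d → Fin d → H →L[ℂ] H) (ψ : H)
    (hproto : BipartiteProtocol M α R T ψ)
    (P P' : H →L[ℂ] H) (hP : P = suppP M ψ) (hP' : P' = suppP' M ψ)
    (V W : Fin d → H →L[ℂ] H)
    (hV : ∀ i, V i = P ∘L (adjoint (R i 0)) ∘L P)
    (hW : ∀ j, W j = P' ∘L (adjoint (T j 0)) ∘L P') :
    (∀ j, (adjoint (V j)) ∘L (V j) = P) ∧
      (∑ i, (V i) ∘L (adjoint (V i))) = P ∧
      (∀ j, (adjoint (W j)) ∘L (W j) = P') ∧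
      (∑ i, (W i) ∘L (adjoint (W i))) = P' := by
  obtain ⟨⟨hRmem, hRnorm⟩, ⟨hTmem, hTnorm⟩, hψ, hRT⟩ := hproto
  have hRcol := cuntz_column_bound R hRnorm
  have hTcol := cuntz_column_bound T hTnorm
  have hTR : ∀ i j, (T i 0) ((R j 0) ψ) = (if i = j then (α i : ℂ) else 0) • ψ := by
    intro i j
    have hc : (R j 0) ((T i 0) ψ) = (T i 0) ((R j 0) ψ) := by
      have h := (VonNeumannAlgebra.mem_commutant_iff.mp (hTmem i 0)) (R j 0) (hRmem j 0)
      calc (R j 0) ((T i 0) ψ) = ((R j 0) * (T i 0)) ψ :=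
            (ContinuousLinearMap.mul_apply _ _ _).symm
        _ = ((T i 0) * (R j 0)) ψ := by rw [h]
        _ = (T i 0) ((R j 0) ψ) := ContinuousLinearMap.mul_apply _ _ _
    rw [← hc, hRT j i]
    by_cases h : i = j
    · subst h; simp
    · simp [h, Ne.symm h]
  have hV' := cuntz_master M α hα hsum (fun i => R i 0) (fun j => T j 0)
    (fun i => hRmem i 0) (fun j => hTmem j 0) hRcol hTcol ψ hψ (fun i j => hRT i j) P
    (by rw [hP]; rfl)
  have hRmem' : ∀ j, R j 0 ∈ M.commutant.commutant := by
    intro j; rw [VonNeumannAlgebra.commutant_commutant]; exact hRmem j 0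
  have hP'2 : P' = suppProjOn ((M.commutant.commutant : Set (H →L[ℂ] H))) ψ := by
    rw [hP', VonNeumannAlgebra.commutant_commutant]; rfl
  have hW' := cuntz_master M.commutant α hα hsum (fun i => T i 0) (fun j => R j 0)
    (fun i => hTmem i 0) hRmem' hTcol hRcol ψ hψ hTR P' hP'2
  refine ⟨fun j => ?_, ?_, fun j => ?_, ?_⟩
  · rw [hV j]; exact hV'.1 j
  · have he : (∑ i, (V i) ∘L (adjoint (V i)))
        = ∑ i, (P ∘L adjoint (R i 0) ∘L P) ∘L adjoint (P ∘L adjoint (R i 0) ∘L P) :=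
      Finset.sum_congr rfl fun i _ => by rw [hV i]
    rw [he]; exact hV'.2
  · rw [hW j]; exact hW'.1 j
  · have he : (∑ i, (W i) ∘L (adjoint (W i)))
        = ∑ i, (P' ∘L adjoint (T i 0) ∘L P') ∘L adjoint (P' ∘L adjoint (T i 0) ∘L P') :=
      Finset.sum_congr rfl fun i _ => by rw [hW i]
    rw [he]; exact hW'.2
end

section
/- Let M ⊆ B(H) be a von Neumann algebra, ψ ∈ H a unit vector, and R a contraction in M_d ⊗ M. Let P be the orthogonal projection of H onto the closure of {Y ψ : Y ∈ M'}, P' the orthogonal projection onto the closure of {X ψ : X ∈ M}, and Q = P P'. Then the following are equivalent: (i) ⟨(R i 0)* X (R j 0) ψ, ψ⟩ = (if i = j then (α i)^2 else 0) · ⟨X ψ, ψ⟩ for all X ∈ M, i, j ∈ Fin d; (ii) ⟨(P (R i 0) P)* (P X P) (P (R j 0) P) ψ, ψ⟩ = (if i = j then (α i)^2 else 0) · ⟨P X P ψ, ψ⟩ for all X ∈ M, i, j ∈ Fin d; (iii) the same condition with P replaced by P'; (iv) the same condition with P replaced by Q. (That is, a monopartite exact embezzlement protocol compresses to one on P M P,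 on P' M P', and on Q M Q, and conversely.) -/
set_option maxHeartbeats 1000000
set_option synthInstance.maxHeartbeats 200000


open scoped InnerProductSpace
open ContinuousLinearMap

variable {H : Type*} [NormedAddCommGroup H] [InnerProductSpace ℂ H] [CompleteSpace H]

section CompressAux

namespace CompressAux

/-- The subspace underlying `suppProjOn`. -/
noncomputable def Ksub (S : Set (H →L[ℂ] H)) (ψ : H) : Submodule ℂ H :=
  (Submodule.span ℂ ((fun Y : H →L[ℂ] H => Y ψ) '' S)).topologicalClosure

instance Ksub_completeSpace (S : Set (H →L[ℂ] H)) (ψ : H) : CompleteSpace (Ksub S ψ) :=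
  Submodule.topologicalClosure.completeSpace _

instance Ksub_hasOrthogonalProjection (S : Set (H →L[ℂ] H)) (ψ : H) :
    Submodule.HasOrthogonalProjection (Ksub S ψ) :=
  Submodule.HasOrthogonalProjection.ofCompleteSpace (Ksub S ψ)

lemma suppProjOn_apply (S : Set (H →L[ℂ] H)) (ψ x : H) :
    suppProjOn S ψ x = (Submodule.orthogonalProjection (Ksub S ψ) x : H) := rfl

lemma supp_mem (S : Set (H →L[ℂ] H)) (ψ x : H) :
    suppProjOn S ψ x ∈ Ksub S ψ := (Submodule.orthogonalProjection (Ksub S ψ) x).2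

lemma supp_fix (S : Set (H →L[ℂ] H)) (ψ : H) {x : H} (hx : x ∈ Ksub S ψ) :
    suppProjOn S ψ x = x := by
  rw [suppProjOn_apply]; exact (Submodule.starProjection_eq_self_iff (K := Ksub S ψ)).mpr hx

lemma supp_idem (S : Set (H →L[ℂ] H)) (ψ x : H) :
    suppProjOn S ψ (suppProjOn S ψ x) = suppProjOn S ψ x :=
  supp_fix S ψ (supp_mem S ψ x)

lemma supp_inner (S : Set (H →L[ℂ] H)) (ψ x y : H) :
    ⟪suppProjOn S ψ x, y⟫_ℂ = ⟪x, suppProjOn S ψ y⟫_ℂ :=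
  Submodule.inner_starProjection_left_eq_right (Ksub S ψ) x y

lemma mem_Ksub_self {S : Set (H →L[ℂ] H)} (h1 : (1 : H →L[ℂ] H) ∈ S) (ψ : H) :
    ψ ∈ Ksub S ψ := by
  apply Submodule.le_topologicalClosure
  exact Submodule.subset_span ⟨1, h1, by simp⟩

lemma supp_psi {S : Set (H →L[ℂ] H)} (h1 : (1 : H →L[ℂ] H) ∈ S) (ψ : H) :
    suppProjOn S ψ ψ = ψ :=
  supp_fix S ψ (mem_Ksub_self h1 ψ)

lemma supp_norm_le (S : Set (H →L[ℂ] H)) (ψ x : H) :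
    ‖suppProjOn S ψ x‖ ≤ ‖x‖ := by
  rw [suppProjOn_apply]
  calc ‖(Submodule.orthogonalProjection (Ksub S ψ) x : H)‖
      ≤ ‖Submodule.orthogonalProjection (Ksub S ψ)‖ * ‖x‖ :=
        (Submodule.orthogonalProjection (Ksub S ψ)).le_opNorm x
    _ ≤ ‖x‖ := mul_le_of_le_one_left (norm_nonneg x) (Submodule.orthogonalProjectionOnto_norm_le (K := Ksub S ψ))

lemma supp_fix_of_norm_eq (S : Set (H →L[ℂ] H)) (ψ : H) {x : H}
    (h : ‖suppProjOn S ψ x‖ = ‖x‖) : suppProjOn S ψ x = x := by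
  have hpyth := Submodule.norm_sq_eq_add_norm_sq_projection x (Ksub S ψ)
  have h1 : ‖Submodule.orthogonalProjectionOnto (Ksub S ψ) x‖ = ‖x‖ := h
  have h0 : ‖Submodule.orthogonalProjectionOnto (Ksub S ψ)ᗮ x‖ = 0 := by
    have h2 : ‖Submodule.orthogonalProjectionOnto (Ksub S ψ)ᗮ x‖ ^ 2 = 0 := by
      rw [h1] at hpyth; linarith
    exact (pow_eq_zero_iff two_ne_zero).mp h2
  have h0' : (Submodule.orthogonalProjectionOnto (Ksub S ψ)ᗮ x : H) = 0 := by
    rw [norm_eq_zero.mp h0]; rfl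
  have hsumx := Submodule.starProjection_add_starProjection_orthogonal (K := Ksub S ψ) x
  rw [Submodule.starProjection_apply, Submodule.starProjection_apply, h0', add_zero] at hsumx
  exact hsumx

lemma Ksub_inv {S : Set (H →L[ℂ] H)} {ψ : H} {A : H →L[ℂ] H}
    (hS : ∀ Y ∈ S, A ∘L Y ∈ S) : ∀ x ∈ Ksub S ψ, A x ∈ Ksub S ψ := by
  have hVinv : ∀ x ∈ Submodule.span ℂ ((fun Y : H →L[ℂ] H => Y ψ) '' S),
      A x ∈ Submodule.span ℂ ((fun Y : H →L[ℂ] H => Y ψ) '' S) := by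
    intro x hx
    induction hx using Submodule.span_induction with
    | mem y hy =>
      obtain ⟨Y, hY, rfl⟩ := hy
      exact Submodule.subset_span ⟨A ∘L Y, hS Y hY, rfl⟩
    | zero => simp
    | add y z hy hz hy' hz' => rw [map_add]; exact Submodule.add_mem _ hy' hz'
    | smul a y hy hy' => rw [map_smul]; exact Submodule.smul_mem _ a hy'
  intro x hx
  have hx' : x ∈ closure ((Submodule.span ℂ ((fun Y : H →L[ℂ] H => Y ψ) '' S) : Set H)) := by
    rw [← Submodule.topologicalClosure_coe]; exact hx
  have hAx := map_mem_closure A.continuous hx' (fun y hy => hVinv y hy)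
  rw [← Submodule.topologicalClosure_coe] at hAx
  exact hAx

lemma supp_comm {S : Set (H →L[ℂ] H)} {ψ : H} (A : H →L[ℂ] H)
    (hA : ∀ x ∈ Ksub S ψ, A x ∈ Ksub S ψ)
    (hA' : ∀ x ∈ Ksub S ψ, ContinuousLinearMap.adjoint A x ∈ Ksub S ψ) (v : H) :
    suppProjOn S ψ (A v) = A (suppProjOn S ψ v) := by
  have hv : v - suppProjOn S ψ v ∈ (Ksub S ψ)ᗮ :=
    Submodule.sub_starProjection_mem_orthogonal (K := Ksub S ψ) v
  have hAv : A (v - suppProjOn S ψ v) ∈ (Ksub S ψ)ᗮ := by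
    rw [Submodule.mem_orthogonal]
    intro u hu
    rw [← ContinuousLinearMap.adjoint_inner_left]
    exact (Submodule.mem_orthogonal (Ksub S ψ) (v - suppProjOn S ψ v)).mp hv _ (hA' u hu)
  have hsplit : A v = A (suppProjOn S ψ v) + A (v - suppProjOn S ψ v) := by
    rw [← map_add]
    congr 1
    abel
  rw [hsplit, map_add]
  have e1 : suppProjOn S ψ (A (suppProjOn S ψ v)) = A (suppProjOn S ψ v) :=
    supp_fix S ψ (hA _ (supp_mem S ψ v))
  have e2 : suppProjOn S ψ (A (v - suppProjOn S ψ v)) = 0 := by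
    rw [suppProjOn_apply,
      Submodule.orthogonalProjectionOnto_apply_of_mem_orthogonal hAv]
    rfl
  rw [e1, e2, add_zero]

lemma blockOp_col {d : ℕ} [NeZero d] (R : Fin d → Fin d → H →L[ℂ] H)
    (hR : ‖blockOp R‖ ≤ 1) (ψ : H) :
    ∑ i, ‖(R i 0) ψ‖ ^ 2 ≤ ‖ψ‖ ^ 2 := by
  classical
  set x : PiLp 2 (fun _ : Fin d => H) :=
    (PiLp.continuousLinearEquiv 2 ℂ (fun _ : Fin d => H)).symm (Pi.single 0 ψ) with hxdef
  have hxj : ∀ j : Fin d, x j = (Pi.single (0 : Fin d) ψ : ∀ _ : Fin d, H) j := fun j => by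
    rw [hxdef]; rfl
  have hx0 : x 0 = ψ := by rw [hxj 0, Pi.single_eq_same]
  have hxb : ∀ b : Fin d, b ≠ 0 → x b = 0 := fun b hb => by
    rw [hxj b, Pi.single_eq_of_ne hb]
  have hBx : ∀ i, (blockOp R x) i = (R i 0) ψ := by
    intro i
    have hform : (blockOp R x) i = ∑ j, (R i j) (x j) := by
      simp [blockOp]
    rw [hform, Finset.sum_eq_single 0 (fun b _ hb => by rw [hxb b hb, map_zero])
      (fun h => absurd (Finset.mem_univ 0) h), hx0]
  have h1 : ‖blockOp R x‖ ^ 2 = ∑ i, ‖(R i 0) ψ‖ ^ 2 := by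
    rw [PiLp.norm_sq_eq_of_L2]
    exact Finset.sum_congr rfl fun i _ => by rw [hBx i]
  have h2 : ‖x‖ ^ 2 = ‖ψ‖ ^ 2 := by
    rw [PiLp.norm_sq_eq_of_L2,
      Finset.sum_eq_single 0 (fun b _ hb => by rw [hxb b hb, norm_zero]; ring)
        (fun h => absurd (Finset.mem_univ 0) h), hx0]
  have h3 : ‖blockOp R x‖ ≤ ‖x‖ :=
    le_trans ((blockOp R).le_opNorm x) (mul_le_of_le_one_left (norm_nonneg x) hR)
  calc ∑ i, ‖(R i 0) ψ‖ ^ 2 = ‖blockOp R x‖ ^ 2 := h1.symm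
    _ ≤ ‖x‖ ^ 2 := pow_le_pow_left₀ (norm_nonneg _) h3 2
    _ = ‖ψ‖ ^ 2 := h2

end CompressAux

end CompressAux

open CompressAux

/-- A monopartite exact embezzlement protocol compresses to one on `P M P`, on `P' M P'`
and on `Q M Q`, and conversely, where `P`, `P'` are the support projections of `⟨· ψ, ψ⟩`
on `M`, `M'` respectively and `Q = P P'`. -/
theorem compressed_monopartite_embezzlement
    {H : Type*} [NormedAddCommGroup H] [InnerProductSpace ℂ H] [CompleteSpace H]
    (M : VonNeumannAlgebra H) {d : ℕ} [NeZero d] (hd : 2 ≤ d)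
    (α : Fin d → ℝ) (hα : ∀ i, 0 < α i) (hsum : ∑ i, (α i) ^ 2 = 1)
    (R : Fin d → Fin d → H →L[ℂ] H) (hR : IsContractionIn M R)
    (ψ : H) (hψ : ‖ψ‖ = 1)
    (P P' Q : H →L[ℂ] H) (hP : P = suppP M ψ) (hP' : P' = suppP' M ψ)
    (hQ : Q = P ∘L P') :
    ((∀ X ∈ M, ∀ i j : Fin d,
        ⟪(adjoint (R i 0)) (X ((R j 0) ψ)), ψ⟫_ℂ
          = (if i = j then ((α i : ℂ)) ^ 2 else 0) * ⟪X ψ, ψ⟫_ℂ) ↔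
      (∀ X ∈ M, ∀ i j : Fin d,
        ⟪(adjoint (P ∘L (R i 0) ∘L P)) ((P ∘L X ∘L P) ((P ∘L (R j 0) ∘L P) ψ)), ψ⟫_ℂ
          = (if i = j then ((α i : ℂ)) ^ 2 else 0) * ⟪(P ∘L X ∘L P) ψ, ψ⟫_ℂ)) ∧
    ((∀ X ∈ M, ∀ i j : Fin d,
        ⟪(adjoint (R i 0)) (X ((R j 0) ψ)), ψ⟫_ℂ
          = (if i = j then ((α i : ℂ)) ^ 2 else 0) * ⟪X ψ, ψ⟫_ℂ) ↔
      (∀ X ∈ M, ∀ i j : Fin d,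
        ⟪(adjoint (P' ∘L (R i 0) ∘L P')) ((P' ∘L X ∘L P') ((P' ∘L (R j 0) ∘L P') ψ)), ψ⟫_ℂ
          = (if i = j then ((α i : ℂ)) ^ 2 else 0) * ⟪(P' ∘L X ∘L P') ψ, ψ⟫_ℂ)) ∧
    ((∀ X ∈ M, ∀ i j : Fin d,
        ⟪(adjoint (R i 0)) (X ((R j 0) ψ)), ψ⟫_ℂ
          = (if i = j then ((α i : ℂ)) ^ 2 else 0) * ⟪X ψ, ψ⟫_ℂ) ↔
      (∀ X ∈ M, ∀ i j : Fin d,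
        ⟪(adjoint (Q ∘L (R i 0) ∘L Q)) ((Q ∘L X ∘L Q) ((Q ∘L (R j 0) ∘L Q) ψ)), ψ⟫_ℂ
          = (if i = j then ((α i : ℂ)) ^ 2 else 0) * ⟪(Q ∘L X ∘L Q) ψ, ψ⟫_ℂ)) := by
  classical
  -- basic inner product fact
  have hone : ⟪ψ, ψ⟫_ℂ = 1 := by
    rw [inner_self_eq_norm_sq_to_K, hψ]; norm_num
  -- facts about P
  have hPψ : P ψ = ψ := by
    rw [hP]; exact supp_psi (SetLike.mem_coe.mpr (one_mem M.commutant)) ψ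
  have hPinner : ∀ x y : H, ⟪P x, y⟫_ℂ = ⟪x, P y⟫_ℂ := by
    rw [hP]; exact fun x y => supp_inner _ ψ x y
  have hPidem : ∀ x : H, P (P x) = P x := by
    rw [hP]; exact fun x => supp_idem _ ψ x
  have hPnorm : ∀ x : H, ‖P x‖ ≤ ‖x‖ := by
    rw [hP]; exact fun x => supp_norm_le _ ψ x
  have hPfixn : ∀ x : H, ‖P x‖ = ‖x‖ → P x = x := by
    rw [hP]; exact fun x h => supp_fix_of_norm_eq _ ψ h
  have hPcomm : ∀ A ∈ M.commutant, ∀ v : H, P (A v) = A (P v) := by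
    intro A hA v
    rw [hP]
    refine supp_comm A (Ksub_inv ?_) (Ksub_inv ?_) v
    · intro Y hY
      exact SetLike.mem_coe.mpr (mul_mem hA (SetLike.mem_coe.mp hY))
    · intro Y hY
      have : star A ∈ M.commutant := star_mem hA
      rw [ContinuousLinearMap.star_eq_adjoint] at this
      exact SetLike.mem_coe.mpr (mul_mem this (SetLike.mem_coe.mp hY))
  have hPM : P ∈ M := by
    rw [← VonNeumannAlgebra.commutant_commutant M, VonNeumannAlgebra.mem_commutant_iff]
    intro g hg
    ext v
    simp only [ContinuousLinearMap.mul_apply]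
    exact (hPcomm g hg v).symm
  -- facts about P'
  have hP'ψ : P' ψ = ψ := by
    rw [hP']; exact supp_psi (SetLike.mem_coe.mpr (one_mem M)) ψ
  have hP'inner : ∀ x y : H, ⟪P' x, y⟫_ℂ = ⟪x, P' y⟫_ℂ := by
    rw [hP']; exact fun x y => supp_inner _ ψ x y
  have hP'comm : ∀ A ∈ M, ∀ v : H, P' (A v) = A (P' v) := by
    intro A hA v
    rw [hP']
    refine supp_comm A (Ksub_inv ?_) (Ksub_inv ?_) v
    · intro Y hY
      exact SetLike.mem_coe.mpr (mul_mem hA (SetLike.mem_coe.mp hY))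
    · intro Y hY
      have : star A ∈ M := star_mem hA
      rw [ContinuousLinearMap.star_eq_adjoint] at this
      exact SetLike.mem_coe.mpr (mul_mem this (SetLike.mem_coe.mp hY))
  have e1 : ∀ Y ∈ M, P' (Y ψ) = Y ψ := fun Y hY => by rw [hP'comm Y hY, hP'ψ]
  -- reduction of the (ii) terms
  have hL2 : ∀ (X : H →L[ℂ] H) (i j : Fin d),
      ⟪(adjoint (P ∘L (R i 0) ∘L P)) ((P ∘L X ∘L P) ((P ∘L (R j 0) ∘L P) ψ)), ψ⟫_ℂ
        = ⟪X (P ((R j 0) ψ)), P ((R i 0) ψ)⟫_ℂ := by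
    intro X i j
    rw [ContinuousLinearMap.adjoint_inner_left]
    simp only [ContinuousLinearMap.comp_apply]
    rw [hPψ, hPidem ((R j 0) ψ), hPinner, hPidem ((R i 0) ψ)]
  have hR2 : ∀ X : H →L[ℂ] H, ⟪(P ∘L X ∘L P) ψ, ψ⟫_ℂ = ⟪X ψ, ψ⟫_ℂ := by
    intro X
    simp only [ContinuousLinearMap.comp_apply, hPψ]
    rw [hPinner, hPψ]
  -- the common core statement
  set core : Prop := (∀ X ∈ M, ∀ i j : Fin d,
      ⟪X (P ((R j 0) ψ)), P ((R i 0) ψ)⟫_ℂ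
        = (if i = j then ((α i : ℂ)) ^ 2 else 0) * ⟪X ψ, ψ⟫_ℂ) with hcore
  -- (ii) ↔ core
  have iff_ii_core : (∀ X ∈ M, ∀ i j : Fin d,
      ⟪(adjoint (P ∘L (R i 0) ∘L P)) ((P ∘L X ∘L P) ((P ∘L (R j 0) ∘L P) ψ)), ψ⟫_ℂ
        = (if i = j then ((α i : ℂ)) ^ 2 else 0) * ⟪(P ∘L X ∘L P) ψ, ψ⟫_ℂ) ↔ core := by
    rw [hcore]
    constructor
    · intro h X hX i j
      have := h X hX i j
      rwa [hL2, hR2] at this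
    · intro h X hX i j
      rw [hL2, hR2]
      exact h X hX i j
  -- (i) → core
  have fwd : (∀ X ∈ M, ∀ i j : Fin d,
      ⟪(adjoint (R i 0)) (X ((R j 0) ψ)), ψ⟫_ℂ
        = (if i = j then ((α i : ℂ)) ^ 2 else 0) * ⟪X ψ, ψ⟫_ℂ) → core := by
    intro h
    rw [hcore]
    intro X hX i j
    have hmem : P ∘L X ∘L P ∈ M := by
      have h1 : P ∘L X ∘L P = P * X * P := by
        ext v; simp [ContinuousLinearMap.mul_apply]
      rw [h1]; exact mul_mem (mul_mem hPM hX) hPM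
    have hXP := h (P ∘L X ∘L P) hmem i j
    rw [ContinuousLinearMap.adjoint_inner_left, hR2] at hXP
    rw [← hXP]
    simp only [ContinuousLinearMap.comp_apply]
    rw [hPinner]
  -- core → (i)
  have bwd : core → (∀ X ∈ M, ∀ i j : Fin d,
      ⟪(adjoint (R i 0)) (X ((R j 0) ψ)), ψ⟫_ℂ
        = (if i = j then ((α i : ℂ)) ^ 2 else 0) * ⟪X ψ, ψ⟫_ℂ) := by
    rw [hcore]
    intro h
    have hnormj : ∀ j : Fin d, ‖P ((R j 0) ψ)‖ ^ 2 = α j ^ 2 := by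
      intro j
      have h1 := h 1 (one_mem M) j j
      simp only [ContinuousLinearMap.one_apply, if_true] at h1
      rw [hone, mul_one, inner_self_eq_norm_sq_to_K] at h1
      have h2 := congrArg Complex.re h1
      push_cast at h2
      exact_mod_cast h2
    have hcol : ∑ j, ‖(R j 0) ψ‖ ^ 2 ≤ 1 := by
      have := CompressAux.blockOp_col R hR.2 ψ
      rwa [hψ, one_pow] at this
    have hle : ∀ j : Fin d, ‖P ((R j 0) ψ)‖ ^ 2 ≤ ‖(R j 0) ψ‖ ^ 2 :=
      fun j => pow_le_pow_left₀ (norm_nonneg _) (hPnorm _) 2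
    have hsumP : ∑ j, ‖P ((R j 0) ψ)‖ ^ 2 = 1 := by
      rw [Finset.sum_congr rfl fun j _ => hnormj j]; exact hsum
    have hge : ∑ j, ‖(R j 0) ψ‖ ^ 2 ≤ ∑ j, ‖P ((R j 0) ψ)‖ ^ 2 := by
      rw [hsumP]; exact hcol
    have heqj : ∀ j : Fin d, ‖P ((R j 0) ψ)‖ ^ 2 = ‖(R j 0) ψ‖ ^ 2 := by
      have hh := (Finset.sum_eq_sum_iff_of_le (fun j _ => hle j)).mp
        (le_antisymm (Finset.sum_le_sum fun j _ => hle j) hge)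
      exact fun j => hh j (Finset.mem_univ j)
    have hfix : ∀ j : Fin d, P ((R j 0) ψ) = (R j 0) ψ := by
      intro j
      apply hPfixn
      have := heqj j
      nlinarith [norm_nonneg (P ((R j 0) ψ)), norm_nonneg ((R j 0) ψ)]
    intro X hX i j
    rw [ContinuousLinearMap.adjoint_inner_left]
    rw [← h X hX i j]
    simp only [hfix]
  -- (iii): termwise identical to (i)
  have iff2 : (∀ X ∈ M, ∀ i j : Fin d,
      ⟪(adjoint (R i 0)) (X ((R j 0) ψ)), ψ⟫_ℂ
        = (if i = j then ((α i : ℂ)) ^ 2 else 0) * ⟪X ψ, ψ⟫_ℂ) ↔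
      (∀ X ∈ M, ∀ i j : Fin d,
      ⟪(adjoint (P' ∘L (R i 0) ∘L P')) ((P' ∘L X ∘L P') ((P' ∘L (R j 0) ∘L P') ψ)), ψ⟫_ℂ
        = (if i = j then ((α i : ℂ)) ^ 2 else 0) * ⟪(P' ∘L X ∘L P') ψ, ψ⟫_ℂ) := by
    have key : ∀ X ∈ M, ∀ i j : Fin d,
        (⟪(adjoint (P' ∘L (R i 0) ∘L P')) ((P' ∘L X ∘L P') ((P' ∘L (R j 0) ∘L P') ψ)), ψ⟫_ℂ
          = ⟪(adjoint (R i 0)) (X ((R j 0) ψ)), ψ⟫_ℂ) ∧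
        (⟪(P' ∘L X ∘L P') ψ, ψ⟫_ℂ = ⟪X ψ, ψ⟫_ℂ) := by
      intro X hX i j
      have b1 : ∀ k : Fin d, (P' ∘L (R k 0) ∘L P') ψ = (R k 0) ψ := by
        intro k
        simp only [ContinuousLinearMap.comp_apply, hP'ψ]
        exact e1 _ (hR.1 k 0)
      have b2 : (P' ∘L X ∘L P') ((R j 0) ψ) = X ((R j 0) ψ) := by
        simp only [ContinuousLinearMap.comp_apply]
        rw [e1 _ (hR.1 j 0)]
        exact e1 (X ∘L (R j 0)) (mul_mem hX (hR.1 j 0))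
      constructor
      · rw [ContinuousLinearMap.adjoint_inner_left,
          ContinuousLinearMap.adjoint_inner_left]
        simp only [b1]
        rw [b2]
      · simp only [ContinuousLinearMap.comp_apply, hP'ψ]
        rw [e1 X hX]
    constructor
    · intro hmain X hX i j
      rw [(key X hX i j).1, (key X hX i j).2]
      exact hmain X hX i j
    · intro hmain X hX i j
      rw [← (key X hX i j).1, ← (key X hX i j).2]
      exact hmain X hX i j
  -- (iv) ↔ core
  have iff_iv_core : (∀ X ∈ M, ∀ i j : Fin d,
      ⟪(adjoint (Q ∘L (R i 0) ∘L Q)) ((Q ∘L X ∘L Q) ((Q ∘L (R j 0) ∘L Q) ψ)), ψ⟫_ℂ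
        = (if i = j then ((α i : ℂ)) ^ 2 else 0) * ⟪(Q ∘L X ∘L Q) ψ, ψ⟫_ℂ) ↔ core := by
    have hQψ : Q ψ = ψ := by rw [hQ]; simp only [ContinuousLinearMap.comp_apply, hP'ψ, hPψ]
    have hQapp : ∀ v : H, Q v = P (P' v) := by
      intro v; rw [hQ]; rfl
    have key : ∀ X ∈ M, ∀ i j : Fin d,
        (⟪(adjoint (Q ∘L (R i 0) ∘L Q)) ((Q ∘L X ∘L Q) ((Q ∘L (R j 0) ∘L Q) ψ)), ψ⟫_ℂ
          = ⟪X (P ((R j 0) ψ)), P ((R i 0) ψ)⟫_ℂ) ∧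
        (⟪(Q ∘L X ∘L Q) ψ, ψ⟫_ℂ = ⟪X ψ, ψ⟫_ℂ) := by
      intro X hX i j
      have b1 : ∀ k : Fin d, (Q ∘L (R k 0) ∘L Q) ψ = P ((R k 0) ψ) := by
        intro k
        simp only [ContinuousLinearMap.comp_apply, hQψ, hQapp, hP'ψ, hPψ]
        rw [e1 _ (hR.1 k 0)]
      have hP'P : ∀ k : Fin d, P' (P ((R k 0) ψ)) = P ((R k 0) ψ) := by
        intro k
        rw [hP'comm P hPM, e1 _ (hR.1 k 0)]
      have b2 : (Q ∘L X ∘L Q) (P ((R j 0) ψ)) = P (X (P ((R j 0) ψ))) := by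
        simp only [ContinuousLinearMap.comp_apply, hQapp]
        rw [hP'P j, hPidem]
        congr 1
        exact e1 (X ∘L P ∘L (R j 0)) (mul_mem hX (mul_mem hPM (hR.1 j 0)))
      constructor
      · rw [ContinuousLinearMap.adjoint_inner_left]
        simp only [b1]
        rw [b2, hPinner, hPidem]
      · simp only [ContinuousLinearMap.comp_apply, hQψ, hQapp, hP'ψ, hPψ]
        rw [e1 X hX, hPinner, hPψ]
    rw [hcore]
    constructor
    · intro hmain X hX i j
      have := hmain X hX i j
      rwa [(key X hX i j).1, (key X hX i j).2] at this
    · intro hmain X hX i j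
      rw [(key X hX i j).1, (key X hX i j).2]
      exact hmain X hX i j
  refine ⟨⟨fun h => iff_ii_core.mpr (fwd h), fun h => bwd (iff_ii_core.mp h)⟩,
    iff2,
    ⟨fun h => iff_iv_core.mpr (fwd h), fun h => bwd (iff_iv_core.mp h)⟩⟩
end
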